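/- If Λ is separating, then Λ-bisimilarity is sound for behavioural equivalence: for any Λ-bisimulation S between T-coalgebras C and D, x S y implies that x and y are behaviourally equivalent. -/

import Mathlib

open CategoryTheory

universe u

/-- A monotone predicate lifting for a `Set`-endofunctor `T`:
a natural transformation `Q → Q ∘ T^op` whose components are monotone. -/
structure PredLifting (T : Type u ⥤ Type u) where
  app : ∀ X : Type u, Set X → Set (T.obj X)
  natural : ∀ {X Y : Type u} (f : X → Y) (A : Set Y),
    app X (f ⁻¹' A) = ⇑(T.map (TypeCat.ofHom f)) ⁻¹' app Y A
  mono : ∀ (X : Type u) ⦃A B : Set X⦄, A ⊆ B → app X A ⊆ app X B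

/-- Relational image `S[A]`. -/
def RelImage {X Y : Type u} (S : X → Y → Prop) (A : Set X) : Set Y :=
  {y | ∃ x ∈ A, S x y}

/-- `S` is a `Λ`-simulation from the `T`-coalgebra `(X,ξ)` to `(Y,ζ)`. -/
def IsSim {T : Type u ⥤ Type u} (Λ : Set (PredLifting T))
    {X Y : Type u} (ξ : X → T.obj X) (ζ : Y → T.obj Y)
    (S : X → Y → Prop) : Prop :=
  ∀ x y, S x y → ∀ L ∈ Λ, ∀ A : Set X,
    ξ x ∈ L.app X A → ζ y ∈ L.app Y (RelImage S A)

/-- `Λ` is separating: elements of `T X` are determined by the lifted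
predicates they satisfy. -/
def Separating {T : Type u ⥤ Type u} (Λ : Set (PredLifting T)) : Prop :=
  ∀ (X : Type u) (t t' : T.obj X),
    (∀ L ∈ Λ, ∀ A : Set X, t ∈ L.app X A ↔ t' ∈ L.app X A) → t = t'

/-- `f` is a coalgebra morphism. -/
def IsCoalgMor {T : Type u ⥤ Type u} {X Y : Type u}
    (ξ : X → T.obj X) (ζ : Y → T.obj Y) (f : X → Y) : Prop :=
  ∀ x, ζ (f x) = T.map (TypeCat.ofHom f) (ξ x)

/-- Behavioural equivalence between states of two coalgebras. -/
def BhvEquiv {T : Type u ⥤ Type u} {X Y : Type u}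
    (ξ : X → T.obj X) (ζ : Y → T.obj Y) (x : X) (y : Y) : Prop :=
  ∃ (Z : Type u) (χ : Z → T.obj Z) (f : X → Z) (g : Y → Z),
    IsCoalgMor ξ χ f ∧ IsCoalgMor ζ χ g ∧ f x = g y

theorem lambda_bisim_sound {T : Type u ⥤ Type u}
    {Λ : Set (PredLifting T)} (hsep : Separating Λ) {X Y : Type u}
    (ξ : X → T.obj X) (ζ : Y → T.obj Y) (S : X → Y → Prop)
    (h1 : IsSim Λ ξ ζ S) (h2 : IsSim Λ ζ ξ (fun y x => S x y)) :
    ∀ x y, S x y → BhvEquiv ξ ζ x y := by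
  classical
  intro x y hxy
  -- Relation on the sum type identifying S-related pairs
  let R : X ⊕ Y → X ⊕ Y → Prop := fun a b =>
    match a, b with
    | Sum.inl x, Sum.inr y => S x y
    | _, _ => False
  let Z := Quot R
  let f : X → Z := fun x => Quot.mk R (Sum.inl x)
  let g : Y → Z := fun y => Quot.mk R (Sum.inr y)
  have hfg : ∀ x y, S x y → f x = g y := fun x y h => Quot.sound h
  -- key: the two transported structures agree on S-related states
  have key : ∀ x y, S x y → T.map (TypeCat.ofHom f) (ξ x) = T.map (TypeCat.ofHom g) (ζ y) := by
    intro x y hS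
    apply hsep
    intro L hL A
    constructor
    · intro ht
      have hx : ξ x ∈ L.app X (f ⁻¹' A) := by
        rw [L.natural f A]; exact ht
      have hy := h1 x y hS L hL _ hx
      have hsub : RelImage S (f ⁻¹' A) ⊆ g ⁻¹' A := by
        rintro y' ⟨x', hx', hS'⟩
        simpa [Set.mem_preimage, ← hfg x' y' hS'] using hx'
      have : ζ y ∈ L.app Y (g ⁻¹' A) := L.mono Y hsub hy
      rw [L.natural g A] at this; exact this
    · intro ht
      have hy : ζ y ∈ L.app Y (g ⁻¹' A) := by
        rw [L.natural g A]; exact ht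
      have hx := h2 y x hS L hL _ hy
      have hsub : RelImage (fun y x => S x y) (g ⁻¹' A) ⊆ f ⁻¹' A := by
        rintro x' ⟨y', hy', hS'⟩
        simpa [Set.mem_preimage, hfg x' y' hS'] using hy'
      have : ξ x ∈ L.app X (f ⁻¹' A) := L.mono X hsub hx
      rw [L.natural f A] at this; exact this
  -- coalgebra structure on the quotient
  let φ : X ⊕ Y → T.obj Z := fun a =>
    match a with
    | Sum.inl x => T.map (TypeCat.ofHom f) (ξ x)
    | Sum.inr y => T.map (TypeCat.ofHom g) (ζ y)
  have hφ : ∀ a b, R a b → φ a = φ b := by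
    rintro (x | y) (x' | y') h <;> simp only [R] at h <;> try exact h.elim
    exact key _ _ h
  let χ : Z → T.obj Z := Quot.lift φ hφ
  refine ⟨Z, χ, f, g, fun x => rfl, fun y => rfl, hfg x y hxy⟩
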